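/- Fix integers n ≥ 2 and 1 ≤ k ≤ n−1, and real numbers a > b. Let Δ ⊂ ℝ^{k(n−k)}, with coordinates Φ_{i,j} for 1 ≤ i ≤ k and 1 ≤ j ≤ n−k, be the set of points satisfying: Φ_{i,j} ≥ Φ_{i+1,j} for 1 ≤ i ≤ k−1, 1 ≤ j ≤ n−k; Φ_{i,j+1} ≥ Φ_{i,j} for 1 ≤ i ≤ k, 1 ≤ j ≤ n−k−1; Φ_{1,n−k} ≤ a; and Φ_{k,1} ≥ b. Then Δ is a compact convex polytope with nonempty interior (dimension k(n−k)), and Δ has exactly (k−1)(n−k) + k(n−k−1) + 2 faces of dimension k(n−k)−1 (facets); moreover each of the listed inequalities defines exactly one facet, with inward primitive integral normal vectors respectively e_{i,j} − e_{i+1,j}, e_{i,j+1} − e_{i,j}, −e_{1,n−k}, and e_{k,1}, where e_{i,j} denotes the standard basis vector of the coordinate Φ_{i,j}. -/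

import Mathlib

noncomputable section

/-- The ambient space `ℝ^{k(n−k)}` (here `m = n−k`), with coordinates `Φ (i,j)`;
the pair `(i,j) : Fin k × Fin m` corresponds to the 1-based coordinate `Φ_{i+1,j+1}`. -/
abbrev GCSpace (k m : ℕ) := (Fin k × Fin m) → ℝ

/-- The Gelfand–Cetlin polytope of `Gr(k,n)` (with `m = n−k`), cut out by
`Φ_{i,j} ≥ Φ_{i+1,j}`, `Φ_{i,j+1} ≥ Φ_{i,j}`, `Φ_{1,m} ≤ a` and `Φ_{k,1} ≥ b`. -/
def gcPolytope (k m : ℕ) (a b : ℝ) : Set (GCSpace k m) :=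
  {Φ | (∀ (i j : ℕ) (h1 : i + 1 < k) (h2 : j < m),
          Φ (⟨i + 1, h1⟩, ⟨j, h2⟩) ≤ Φ (⟨i, Nat.lt_of_succ_lt h1⟩, ⟨j, h2⟩)) ∧
       (∀ (i j : ℕ) (h1 : i < k) (h2 : j + 1 < m),
          Φ (⟨i, h1⟩, ⟨j, Nat.lt_of_succ_lt h2⟩) ≤ Φ (⟨i, h1⟩, ⟨j + 1, h2⟩)) ∧
       (∀ (h1 : 0 < k) (h2 : 0 < m),
          Φ (⟨0, h1⟩, ⟨m - 1, Nat.sub_one_lt h2.ne'⟩) ≤ a) ∧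
       (∀ (h1 : 0 < k) (h2 : 0 < m),
          b ≤ Φ (⟨k - 1, Nat.sub_one_lt h1.ne'⟩, ⟨0, h2⟩))}

/-- `F` is a (nonempty, exposed) face of `Δ`: the set of points of `Δ` where some
affine functional attains its minimum on `Δ`. -/
def IsFaceOf {k m : ℕ} (Δ F : Set (GCSpace k m)) : Prop :=
  F.Nonempty ∧ ∃ ℓ : GCSpace k m →ₗ[ℝ] ℝ, F = {x ∈ Δ | ∀ y ∈ Δ, ℓ x ≤ ℓ y}

/-- The dimension of a subset of `ℝ^{k·m}`: the dimension of its affine span. -/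
def faceDim {k m : ℕ} (F : Set (GCSpace k m)) : ℕ :=
  Module.finrank ℝ (vectorSpan ℝ F)

/-- Euclidean inner product on `GCSpace k m`. -/
def gcDot {k m : ℕ} (v x : GCSpace k m) : ℝ := ∑ p, v p * x p

/-- The standard basis vector `e_{i,j}`. -/
def gcBasis (k m : ℕ) (i : Fin k) (j : Fin m) : GCSpace k m := Pi.single (i, j) 1

/-- Index type for the defining inequalities of the Gelfand–Cetlin polytope:
`(k−1)·m` row inequalities, `k·(m−1)` column inequalities, and the two exceptional ones. -/
abbrev GCIneq (k m : ℕ) := (Fin (k - 1) × Fin m) ⊕ ((Fin k × Fin (m - 1)) ⊕ (Unit ⊕ Unit))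

/-- The inward primitive integral normal vector and constant `(v, c)` of each defining
inequality, the inequality being `⟪v, Φ⟫ ≥ c`. -/
def gcNormal (k m : ℕ) (hk : 0 < k) (hm : 0 < m) (a b : ℝ) :
    GCIneq k m → GCSpace k m × ℝ
  | .inl (i, j) =>
      (gcBasis k m ⟨i.1, by have := i.2; omega⟩ j -
        gcBasis k m ⟨i.1 + 1, by have := i.2; omega⟩ j, 0)
  | .inr (.inl (i, j)) =>
      (gcBasis k m i ⟨j.1 + 1, by have := j.2; omega⟩ -
        gcBasis k m i ⟨j.1, by have := j.2; omega⟩, 0)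
  | .inr (.inr (.inl _)) =>
      (-(gcBasis k m ⟨0, hk⟩ ⟨m - 1, Nat.sub_one_lt hm.ne'⟩), -a)
  | .inr (.inr (.inr _)) =>
      (gcBasis k m ⟨k - 1, Nat.sub_one_lt hk.ne'⟩ ⟨0, hm⟩, b)


namespace GCAux

open Module

variable {k m : ℕ}

lemma gcDot_single (p : Fin k × Fin m) (x : GCSpace k m) :
    gcDot (Pi.single p 1) x = x p := by
  simp [gcDot, Pi.single_apply, Finset.sum_ite_eq]

lemma gcDot_sub (u v x : GCSpace k m) : gcDot (u - v) x = gcDot u x - gcDot v x := by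
  simp [gcDot, sub_mul, Finset.sum_sub_distrib]

lemma gcDot_neg (u x : GCSpace k m) : gcDot (-u) x = -gcDot u x := by
  simp [gcDot, Finset.sum_neg_distrib]

lemma gcDot_add_right (v x y : GCSpace k m) : gcDot v (x + y) = gcDot v x + gcDot v y := by
  simp [gcDot, mul_add, Finset.sum_add_distrib]

lemma gcDot_smul_right (v : GCSpace k m) (t : ℝ) (x : GCSpace k m) :
    gcDot v (t • x) = t * gcDot v x := by
  simp only [gcDot, Finset.mul_sum, Pi.smul_apply, smul_eq_mul]
  exact Finset.sum_congr rfl fun p _ => by ring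

/-- `gcDot v` as a linear map. -/
def gcDotL (v : GCSpace k m) : GCSpace k m →ₗ[ℝ] ℝ where
  toFun := gcDot v
  map_add' x y := gcDot_add_right v x y
  map_smul' t x := by simpa using gcDot_smul_right v t x

@[simp] lemma gcDotL_apply (v x : GCSpace k m) : gcDotL v x = gcDot v x := rfl


variable (hk : 0 < k) (hm : 0 < m) (a b : ℝ)

lemma dot_row (i : Fin (k-1)) (j : Fin m) (x : GCSpace k m) :
    gcDot (gcNormal k m hk hm a b (.inl (i, j))).1 x =
      x (⟨i.1, by have := i.2; omega⟩, j) - x (⟨i.1 + 1, by have := i.2; omega⟩, j) := by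
  show gcDot (gcBasis k m _ _ - gcBasis k m _ _) x = _
  rw [gcDot_sub]
  simp [gcBasis, gcDot_single]

lemma dot_col (i : Fin k) (j : Fin (m-1)) (x : GCSpace k m) :
    gcDot (gcNormal k m hk hm a b (.inr (.inl (i, j)))).1 x =
      x (i, ⟨j.1 + 1, by have := j.2; omega⟩) - x (i, ⟨j.1, by have := j.2; omega⟩) := by
  show gcDot (gcBasis k m _ _ - gcBasis k m _ _) x = _
  rw [gcDot_sub]
  simp [gcBasis, gcDot_single]

lemma dot_top (u : Unit) (x : GCSpace k m) :
    gcDot (gcNormal k m hk hm a b (.inr (.inr (.inl u)))).1 x =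
      -x (⟨0, hk⟩, ⟨m - 1, Nat.sub_one_lt hm.ne'⟩) := by
  show gcDot (-(gcBasis k m _ _)) x = _
  rw [gcDot_neg]
  simp [gcBasis, gcDot_single]

lemma dot_bot (u : Unit) (x : GCSpace k m) :
    gcDot (gcNormal k m hk hm a b (.inr (.inr (.inr u)))).1 x =
      x (⟨k - 1, Nat.sub_one_lt hk.ne'⟩, ⟨0, hm⟩) := by
  show gcDot (gcBasis k m _ _) x = _
  simp [gcBasis, gcDot_single]

@[simp] lemma cst_row (i : Fin (k-1)) (j : Fin m) :
    (gcNormal k m hk hm a b (.inl (i, j))).2 = 0 := rfl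

@[simp] lemma cst_col (i : Fin k) (j : Fin (m-1)) :
    (gcNormal k m hk hm a b (.inr (.inl (i, j)))).2 = 0 := rfl

@[simp] lemma cst_top (u : Unit) :
    (gcNormal k m hk hm a b (.inr (.inr (.inl u)))).2 = -a := rfl

@[simp] lemma cst_bot (u : Unit) :
    (gcNormal k m hk hm a b (.inr (.inr (.inr u)))).2 = b := rfl

lemma mem_gcPolytope_iff (x : GCSpace k m) :
    x ∈ gcPolytope k m a b ↔
      ∀ q : GCIneq k m, (gcNormal k m hk hm a b q).2 ≤ gcDot (gcNormal k m hk hm a b q).1 x := by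
  constructor
  · rintro ⟨h1, h2, h3, h4⟩ (⟨i, j⟩ | ⟨i, j⟩ | u | u)
    · rw [dot_row]
      have := h1 i.1 j.1 (by have := i.2; omega) j.2
      simpa [sub_nonneg] using this
    · rw [dot_col]
      have := h2 i.1 j.1 i.2 (by have := j.2; omega)
      simpa [sub_nonneg] using this
    · rw [dot_top]
      have := h3 hk hm
      simpa using this
    · rw [dot_bot]
      exact h4 hk hm
  · intro h
    refine ⟨fun i j h1 h2 => ?_, fun i j h1 h2 => ?_, fun _ _ => ?_, fun _ _ => ?_⟩
    · have := h (.inl (⟨i, by omega⟩, ⟨j, h2⟩))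
      rw [dot_row, cst_row] at this
      simpa [sub_nonneg] using this
    · have := h (.inr (.inl (⟨i, h1⟩, ⟨j, by omega⟩)))
      rw [dot_col, cst_col] at this
      simpa [sub_nonneg] using this
    · have := h (.inr (.inr (.inl ())))
      rw [dot_top, cst_top] at this
      simpa [neg_le_neg_iff] using this
    · have := h (.inr (.inr (.inr ())))
      rw [dot_bot, cst_bot] at this
      simpa using this


lemma col_mono {x : GCSpace k m} (hx : x ∈ gcPolytope k m a b) (i : ℕ) (hi : i < k) :
    ∀ (j j' : ℕ) (hjj' : j ≤ j') (hj' : j' < m),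
      x (⟨i, hi⟩, ⟨j, by omega⟩) ≤ x (⟨i, hi⟩, ⟨j', hj'⟩) := by
  intro j j'
  induction j' with
  | zero =>
    intro hjj' hj'
    have : j = 0 := by omega
    subst this
    exact le_refl _
  | succ n ih =>
    intro hjj' hj'
    rcases Nat.lt_or_ge j (n + 1) with hlt | hge
    · have h1 : j ≤ n := by omega
      have h2 : n < m := by omega
      exact le_trans (ih h1 h2) (hx.2.1 i n hi hj')
    · have : j = n + 1 := by omega
      subst this
      exact le_refl _

lemma row_anti {x : GCSpace k m} (hx : x ∈ gcPolytope k m a b) (j : ℕ) (hj : j < m) :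
    ∀ (i i' : ℕ) (hii' : i ≤ i') (hi' : i' < k),
      x (⟨i', hi'⟩, ⟨j, hj⟩) ≤ x (⟨i, by omega⟩, ⟨j, hj⟩) := by
  intro i i'
  induction i' with
  | zero =>
    intro hii' hi'
    have : i = 0 := by omega
    subst this
    exact le_refl _
  | succ n ih =>
    intro hii' hi'
    rcases Nat.lt_or_ge i (n + 1) with hlt | hge
    · have h1 : i ≤ n := by omega
      have h2 : n < k := by omega
      exact le_trans (hx.1 n j hi' hj) (ih h1 h2)
    · have : i = n + 1 := by omega
      subst this
      exact le_refl _

lemma le_a_of_mem {x : GCSpace k m} (hx : x ∈ gcPolytope k m a b) (p : Fin k × Fin m) :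
    x p ≤ a := by
  have h1 : x p ≤ x (p.1, ⟨m - 1, Nat.sub_one_lt (by have := p.2.2; omega : m ≠ 0)⟩) := by
    have := col_mono a b hx p.1.1 p.1.2 p.2.1 (m - 1) (by have := p.2.2; omega)
      (Nat.sub_one_lt (by have := p.2.2; omega : m ≠ 0))
    simpa using this
  have h2 : x (p.1, ⟨m - 1, Nat.sub_one_lt (by have := p.2.2; omega : m ≠ 0)⟩) ≤
      x (⟨0, by have := p.1.2; omega⟩, ⟨m - 1, Nat.sub_one_lt (by have := p.2.2; omega : m ≠ 0)⟩) := by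
    have := row_anti a b hx (m - 1) (Nat.sub_one_lt (by have := p.2.2; omega : m ≠ 0))
      0 p.1.1 (by omega) p.1.2
    simpa using this
  have h3 := hx.2.2.1 (by have := p.1.2; omega : 0 < k) (by have := p.2.2; omega : 0 < m)
  calc x p ≤ _ := h1
    _ ≤ _ := h2
    _ ≤ a := h3

lemma b_le_of_mem {x : GCSpace k m} (hx : x ∈ gcPolytope k m a b) (p : Fin k × Fin m) :
    b ≤ x p := by
  have h1 : x (p.1, ⟨0, by have := p.2.2; omega⟩) ≤ x p := by
    have := col_mono a b hx p.1.1 p.1.2 0 p.2.1 (by omega) p.2.2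
    simpa using this
  have h2 : x (⟨k - 1, Nat.sub_one_lt (by have := p.1.2; omega : k ≠ 0)⟩, ⟨0, by have := p.2.2; omega⟩) ≤
      x (p.1, ⟨0, by have := p.2.2; omega⟩) := by
    have := row_anti a b hx 0 (by have := p.2.2; omega : 0 < m) p.1.1 (k - 1)
      (by have := p.1.2; omega) (Nat.sub_one_lt (by have := p.1.2; omega : k ≠ 0))
    simpa using this
  have h3 := hx.2.2.2 (by have := p.1.2; omega : 0 < k) (by have := p.2.2; omega : 0 < m)
  calc b ≤ _ := h3
    _ ≤ _ := h2
    _ ≤ x p := h1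

include hk hm in
lemma gcPolytope_eq_iInter :
    gcPolytope k m a b =
      ⋂ q : GCIneq k m,
        {x : GCSpace k m | (gcNormal k m hk hm a b q).2 ≤ gcDotL (gcNormal k m hk hm a b q).1 x} := by
  ext x
  simp only [Set.mem_iInter, Set.mem_setOf_eq, gcDotL_apply]
  exact mem_gcPolytope_iff hk hm a b x

include hk hm in
lemma isClosed_gcPolytope : IsClosed (gcPolytope k m a b) := by
  rw [gcPolytope_eq_iInter hk hm a b]
  exact isClosed_iInter fun q =>
    isClosed_le continuous_const (gcDotL _).continuous_of_finiteDimensional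

include hk hm in
lemma convex_gcPolytope : Convex ℝ (gcPolytope k m a b) := by
  rw [gcPolytope_eq_iInter hk hm a b]
  exact convex_iInter fun q =>
    convex_halfSpace_ge ⟨fun x y => (gcDotL _).map_add x y, fun c x => (gcDotL _).map_smul c x⟩ _

include hk hm in
lemma isCompact_gcPolytope : IsCompact (gcPolytope k m a b) := by
  refine IsCompact.of_isClosed_subset (isCompact_Icc (a := fun _ : Fin k × Fin m => b)
    (b := fun _ => a)) (isClosed_gcPolytope hk hm a b) ?_
  intro x hx
  constructor
  · intro p
    exact b_le_of_mem a b hx p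
  · intro p
    exact le_a_of_mem a b hx p


instance : Nonempty (GCIneq k m) := ⟨.inr (.inr (.inl ()))⟩

include hk hm in
/-- Moving lemma: from a point of the polytope one can move in any direction that is
orthogonal to the normals of all active constraints, and stay in the polytope. -/
lemma move {x : GCSpace k m} (w : GCSpace k m) (hx : x ∈ gcPolytope k m a b)
    (h : ∀ q : GCIneq k m,
      gcDot (gcNormal k m hk hm a b q).1 x = (gcNormal k m hk hm a b q).2 →
      gcDot (gcNormal k m hk hm a b q).1 w = 0) :
    ∃ t : ℝ, 0 < t ∧ x + t • w ∈ gcPolytope k m a b := by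
  classical
  set d : GCIneq k m → ℝ := fun q => gcDot (gcNormal k m hk hm a b q).1 w with hd
  set s : GCIneq k m → ℝ := fun q =>
    gcDot (gcNormal k m hk hm a b q).1 x - (gcNormal k m hk hm a b q).2 with hs
  have hs0 : ∀ q, 0 ≤ s q := fun q =>
    sub_nonneg.mpr ((mem_gcPolytope_iff hk hm a b x).mp hx q)
  set f : GCIneq k m → ℝ := fun q => if d q = 0 then 1 else s q / |d q| with hf
  have hfpos : ∀ q, 0 < f q := by
    intro q
    by_cases hq : d q = 0
    · simp [hf, hq]
    · have hsq : 0 < s q := by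
        rcases lt_or_eq_of_le (hs0 q) with h' | h'
        · exact h'
        · exfalso
          apply hq
          apply h q
          have h'' : gcDot (gcNormal k m hk hm a b q).1 x -
              (gcNormal k m hk hm a b q).2 = 0 := h'.symm
          linarith
      have : (0:ℝ) < |d q| := abs_pos.mpr hq
      simp only [hf, if_neg hq]
      positivity
  have hne : (Finset.univ : Finset (GCIneq k m)).Nonempty := Finset.univ_nonempty
  set t : ℝ := Finset.univ.inf' hne f with ht
  have htpos : 0 < t := (Finset.lt_inf'_iff hne).mpr fun q _ => hfpos q
  refine ⟨t, htpos, ?_⟩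
  rw [mem_gcPolytope_iff hk hm a b]
  intro q
  rw [gcDot_add_right, gcDot_smul_right]
  have hdq : gcDot (gcNormal k m hk hm a b q).1 w = d q := rfl
  rw [hdq]
  by_cases hq : d q = 0
  · rw [hq]
    simpa using (mem_gcPolytope_iff hk hm a b x).mp hx q
  · have hle : t ≤ s q / |d q| := by
      have := Finset.inf'_le f (Finset.mem_univ q)
      rw [← ht] at this
      simpa [hf, if_neg hq] using this
    have habs : 0 < |d q| := abs_pos.mpr hq
    have h1 : t * |d q| ≤ s q := by
      rw [div_eq_mul_inv] at hle
      calc t * |d q| ≤ (s q * |d q|⁻¹) * |d q| :=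
            mul_le_mul_of_nonneg_right hle (le_of_lt habs)
        _ = s q := by field_simp
    have h2 : -(t * |d q|) ≤ t * d q := by
      have := neg_abs_le (d q)
      nlinarith
    have := hs0 q
    simp only [hs] at this h1
    linarith

include hk hm in
lemma exists_uniform_slack {x : GCSpace k m}
    (h : ∀ q : GCIneq k m,
      (gcNormal k m hk hm a b q).2 < gcDot (gcNormal k m hk hm a b q).1 x) :
    ∃ δ : ℝ, 0 < δ ∧ ∀ q : GCIneq k m,
      (gcNormal k m hk hm a b q).2 + δ ≤ gcDot (gcNormal k m hk hm a b q).1 x := by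
  have hne : (Finset.univ : Finset (GCIneq k m)).Nonempty := Finset.univ_nonempty
  refine ⟨Finset.univ.inf' hne
    (fun q => gcDot (gcNormal k m hk hm a b q).1 x - (gcNormal k m hk hm a b q).2), ?_, ?_⟩
  · exact (Finset.lt_inf'_iff hne).mpr fun q _ => sub_pos.mpr (h q)
  · intro q
    have := Finset.inf'_le
      (fun q => gcDot (gcNormal k m hk hm a b q).1 x - (gcNormal k m hk hm a b q).2)
      (Finset.mem_univ q)
    linarith

lemma abs_dot_le (q : GCIneq k m) {y : GCSpace k m} {ε : ℝ}
    (hy : ∀ p, |y p| ≤ ε) :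
    |gcDot (gcNormal k m hk hm a b q).1 y| ≤ 2 * ε := by
  obtain (⟨i, j⟩ | ⟨i, j⟩ | u | u) := q
  · rw [dot_row]
    refine le_trans (abs_sub _ _) ?_
    have := hy (⟨i.1, by have := i.2; omega⟩, j)
    have := hy (⟨i.1 + 1, by have := i.2; omega⟩, j)
    linarith
  · rw [dot_col]
    refine le_trans (abs_sub _ _) ?_
    have := hy (i, ⟨j.1 + 1, by have := j.2; omega⟩)
    have := hy (i, ⟨j.1, by have := j.2; omega⟩)
    linarith
  · rw [dot_top, abs_neg]
    have h1 := hy (⟨0, hk⟩, ⟨m - 1, Nat.sub_one_lt hm.ne'⟩)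
    have h2 := abs_nonneg (y (⟨0, hk⟩, ⟨m - 1, Nat.sub_one_lt hm.ne'⟩))
    linarith
  · rw [dot_bot]
    have h1 := hy (⟨k - 1, Nat.sub_one_lt hk.ne'⟩, ⟨0, hm⟩)
    have h2 := abs_nonneg (y (⟨k - 1, Nat.sub_one_lt hk.ne'⟩, ⟨0, hm⟩))
    linarith

include hk hm in
lemma ball_subset {x : GCSpace k m} {δ : ℝ} (hδ : 0 < δ)
    (h : ∀ q : GCIneq k m,
      (gcNormal k m hk hm a b q).2 + δ ≤ gcDot (gcNormal k m hk hm a b q).1 x) :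
    Metric.ball x (δ / 2) ⊆ gcPolytope k m a b := by
  intro y hy
  have hcoord : ∀ p, |y p - x p| ≤ δ / 2 := by
    intro p
    have := (dist_pi_lt_iff (by linarith : (0:ℝ) < δ / 2)).mp (Metric.mem_ball.mp hy) p
    rw [Real.dist_eq] at this
    linarith
  rw [mem_gcPolytope_iff hk hm a b]
  intro q
  have hdec : gcDot (gcNormal k m hk hm a b q).1 y =
      gcDot (gcNormal k m hk hm a b q).1 x + gcDot (gcNormal k m hk hm a b q).1 (y - x) := by
    have := gcDot_add_right (gcNormal k m hk hm a b q).1 x (y - x)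
    simpa using this
  have habs := abs_dot_le hk hm a b q (y := y - x) (fun p => by simpa using hcoord p)
  have := h q
  have := neg_abs_le (gcDot (gcNormal k m hk hm a b q).1 (y - x))
  rw [hdec]
  linarith


/-- A point of the ambient space built from a grid function, affinely rescaled to `[b,a]`. -/
def gcPt (a b : ℝ) (g : ℕ → ℕ → ℝ) : GCSpace k m := fun p => b + (a - b) * g p.1.1 p.2.1

lemma dot_row_pt (g : ℕ → ℕ → ℝ) (i : Fin (k-1)) (j : Fin m) :
    gcDot (gcNormal k m hk hm a b (.inl (i, j))).1 (gcPt a b g) =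
      (a - b) * (g i.1 j.1 - g (i.1 + 1) j.1) := by
  rw [dot_row]
  simp only [gcPt]
  ring

lemma dot_col_pt (g : ℕ → ℕ → ℝ) (i : Fin k) (j : Fin (m-1)) :
    gcDot (gcNormal k m hk hm a b (.inr (.inl (i, j)))).1 (gcPt a b g) =
      (a - b) * (g i.1 (j.1 + 1) - g i.1 j.1) := by
  rw [dot_col]
  simp only [gcPt]
  ring

lemma dot_top_pt (g : ℕ → ℕ → ℝ) (u : Unit) :
    gcDot (gcNormal k m hk hm a b (.inr (.inr (.inl u)))).1 (gcPt a b g) =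
      -(b + (a - b) * g 0 (m - 1)) := by
  rw [dot_top]
  simp only [gcPt]

lemma dot_bot_pt (g : ℕ → ℕ → ℝ) (u : Unit) :
    gcDot (gcNormal k m hk hm a b (.inr (.inr (.inr u)))).1 (gcPt a b g) =
      b + (a - b) * g (k - 1) 0 := by
  rw [dot_bot]
  simp only [gcPt]

lemma memPt {g : ℕ → ℕ → ℝ} (hab : b < a)
    (hg1 : ∀ i j : ℕ, i + 1 < k → j < m → g (i + 1) j ≤ g i j)
    (hg2 : ∀ i j : ℕ, i < k → j + 1 < m → g i j ≤ g i (j + 1))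
    (hg3 : g 0 (m - 1) ≤ 1) (hg4 : 0 ≤ g (k - 1) 0) :
    gcPt a b g ∈ gcPolytope k m a b := by
  refine ⟨fun i j h1 h2 => ?_, fun i j h1 h2 => ?_, fun _ _ => ?_, fun _ _ => ?_⟩
  · have := hg1 i j h1 h2
    simp only [gcPt]
    nlinarith
  · have := hg2 i j h1 h2
    simp only [gcPt]
    nlinarith
  · simp only [gcPt]
    nlinarith
  · simp only [gcPt]
    nlinarith

lemma div_lt_div_D {A B D : ℝ} (hD : 0 < D) (h : A < B) : A / D < B / D := by
  rw [div_lt_div_iff₀ hD hD]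
  nlinarith


/-- Grid function for the interior point. -/
def gInt (k m : ℕ) : ℕ → ℕ → ℝ := fun i j => ((k:ℝ) - i + j) / ((k:ℝ) + m)

include hk hm in
lemma exists_interior_point (hab : b < a) :
    ∃ x : GCSpace k m, x ∈ gcPolytope k m a b ∧
      ∀ q : GCIneq k m,
        (gcNormal k m hk hm a b q).2 < gcDot (gcNormal k m hk hm a b q).1 x := by
  have hK : (1:ℝ) ≤ (k:ℝ) := by exact_mod_cast hk
  have hM : (1:ℝ) ≤ (m:ℝ) := by exact_mod_cast hm
  have hD : (0:ℝ) < (k:ℝ) + m := by linarith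
  have hm1 : ((m - 1 : ℕ):ℝ) = (m:ℝ) - 1 := by
    rw [Nat.cast_sub hm]
    norm_num
  have hk1 : ((k - 1 : ℕ):ℝ) = (k:ℝ) - 1 := by
    rw [Nat.cast_sub hk]
    norm_num
  have hrow : ∀ i j : ℕ, gInt k m (i + 1) j < gInt k m i j := by
    intro i j
    apply div_lt_div_D hD
    push_cast
    linarith
  have hcol : ∀ i j : ℕ, gInt k m i j < gInt k m i (j + 1) := by
    intro i j
    apply div_lt_div_D hD
    push_cast
    linarith
  have htop : gInt k m 0 (m - 1) < 1 := by
    unfold gInt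
    rw [div_lt_one hD, hm1]
    norm_num
  have hbot : 0 < gInt k m (k - 1) 0 := by
    unfold gInt
    apply div_pos ?_ hD
    rw [hk1]
    norm_num
  refine ⟨gcPt a b (gInt k m),
    memPt a b hab (fun i j _ _ => le_of_lt (hrow i j)) (fun i j _ _ => le_of_lt (hcol i j))
      (le_of_lt htop) (le_of_lt hbot), ?_⟩
  rintro (⟨i, j⟩ | ⟨i, j⟩ | u | u)
  · rw [dot_row_pt, cst_row]
    have := hrow i.1 j.1
    nlinarith
  · rw [dot_col_pt, cst_col]
    have := hcol i.1 j.1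
    nlinarith
  · rw [dot_top_pt, cst_top]
    nlinarith [htop]
  · rw [dot_bot_pt, cst_bot]
    nlinarith [hbot]


/-- Grid function for a generic point on a row facet. -/
def gRow (k m i0 j0 : ℕ) : ℕ → ℕ → ℝ := fun i j =>
  ((k:ℝ) - 1 - i + 2*j + 2 - (if i = i0 ∧ j = j0 then 1 else 0)) / ((k:ℝ) + 2*m + 3)

include hk hm in
lemma rowFacetPoint (hab : b < a) (i0 : Fin (k-1)) (j0 : Fin m) :
    ∃ x : GCSpace k m, x ∈ gcPolytope k m a b ∧
      gcDot (gcNormal k m hk hm a b (.inl (i0, j0))).1 x =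
        (gcNormal k m hk hm a b (.inl (i0, j0))).2 ∧
      ∀ q : GCIneq k m, q ≠ .inl (i0, j0) →
        (gcNormal k m hk hm a b q).2 < gcDot (gcNormal k m hk hm a b q).1 x := by
  classical
  have hK : (1:ℝ) ≤ (k:ℝ) := by exact_mod_cast hk
  have hM : (1:ℝ) ≤ (m:ℝ) := by exact_mod_cast hm
  have hD : (0:ℝ) < (k:ℝ) + 2*m + 3 := by linarith
  have hm1 : ((m - 1 : ℕ):ℝ) = (m:ℝ) - 1 := by rw [Nat.cast_sub hm]; norm_num
  have hk1 : ((k - 1 : ℕ):ℝ) = (k:ℝ) - 1 := by rw [Nat.cast_sub hk]; norm_num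
  have hi0 : i0.1 < k - 1 := i0.2
  have hj0 : j0.1 < m := j0.2
  set g := gRow k m i0.1 j0.1 with hgdef
  have hrowEq : g (i0.1 + 1) j0.1 = g i0.1 j0.1 := by
    simp only [hgdef, gRow]
    rw [if_neg (by omega)]
    rw [if_pos (by exact ⟨trivial, trivial⟩)]
    push_cast
    ring
  have hrowLt : ∀ i j : ℕ, ¬(i = i0.1 ∧ j = j0.1) → g (i + 1) j < g i j := by
    intro i j hne
    simp only [hgdef, gRow]
    apply div_lt_div_D hD
    rw [if_neg hne]
    by_cases hc : i + 1 = i0.1 ∧ j = j0.1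
    · rw [if_pos hc]
      push_cast
      linarith
    · rw [if_neg hc]
      push_cast
      linarith
  have hrowLe : ∀ i j : ℕ, g (i + 1) j ≤ g i j := by
    intro i j
    by_cases hc : i = i0.1 ∧ j = j0.1
    · obtain ⟨h1', h2'⟩ := hc
      subst h1'
      subst h2'
      exact le_of_eq hrowEq
    · exact le_of_lt (hrowLt i j hc)
  have hcolLt : ∀ i j : ℕ, g i j < g i (j + 1) := by
    intro i j
    simp only [hgdef, gRow]
    apply div_lt_div_D hD
    by_cases hc : i = i0.1 ∧ j = j0.1
    · rw [if_pos hc, if_neg (by omega)]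
      push_cast
      linarith
    · rw [if_neg hc]
      by_cases hc' : i = i0.1 ∧ j + 1 = j0.1
      · rw [if_pos hc']
        push_cast
        linarith
      · rw [if_neg hc']
        push_cast
        linarith
  have htopLt : g 0 (m - 1) < 1 := by
    simp only [hgdef, gRow]
    rw [div_lt_one hD, hm1]
    by_cases hc : (0:ℕ) = i0.1 ∧ m - 1 = j0.1
    · rw [if_pos hc]
      linarith
    · rw [if_neg hc]
      linarith
  have hbotPos : 0 < g (k - 1) 0 := by
    simp only [hgdef, gRow]
    apply div_pos ?_ hD
    rw [hk1]
    by_cases hc : k - 1 = i0.1 ∧ (0:ℕ) = j0.1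
    · rw [if_pos hc]
      linarith
    · rw [if_neg hc]
      linarith
  refine ⟨gcPt a b g,
    memPt a b hab (fun i j _ _ => hrowLe i j) (fun i j _ _ => le_of_lt (hcolLt i j))
      (le_of_lt htopLt) (le_of_lt hbotPos), ?_, ?_⟩
  · rw [dot_row_pt, cst_row, hrowEq]
    ring
  · rintro (⟨i, j⟩ | ⟨i, j⟩ | u | u) hq
    · rw [dot_row_pt, cst_row]
      have hne : ¬(i.1 = i0.1 ∧ j.1 = j0.1) := by
        rintro ⟨h1', h2'⟩
        exact hq (by rw [Fin.ext h1', Fin.ext h2'])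
      have := hrowLt i.1 j.1 hne
      nlinarith
    · rw [dot_col_pt, cst_col]
      have := hcolLt i.1 j.1
      nlinarith
    · rw [dot_top_pt, cst_top]
      nlinarith [htopLt]
    · rw [dot_bot_pt, cst_bot]
      nlinarith [hbotPos]


/-- Grid function for a generic point on a column facet. -/
def gCol (k m i0 j0 : ℕ) : ℕ → ℕ → ℝ := fun i j =>
  (2*((k:ℝ) - 1 - i) + j + 2 - (if i = i0 ∧ j = j0 + 1 then 1 else 0)) / (2*(k:ℝ) + m + 2)

include hk hm in
lemma colFacetPoint (hab : b < a) (i0 : Fin k) (j0 : Fin (m-1)) :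
    ∃ x : GCSpace k m, x ∈ gcPolytope k m a b ∧
      gcDot (gcNormal k m hk hm a b (.inr (.inl (i0, j0)))).1 x =
        (gcNormal k m hk hm a b (.inr (.inl (i0, j0)))).2 ∧
      ∀ q : GCIneq k m, q ≠ .inr (.inl (i0, j0)) →
        (gcNormal k m hk hm a b q).2 < gcDot (gcNormal k m hk hm a b q).1 x := by
  classical
  have hK : (1:ℝ) ≤ (k:ℝ) := by exact_mod_cast hk
  have hM : (1:ℝ) ≤ (m:ℝ) := by exact_mod_cast hm
  have hD : (0:ℝ) < 2*(k:ℝ) + m + 2 := by linarith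
  have hm1 : ((m - 1 : ℕ):ℝ) = (m:ℝ) - 1 := by rw [Nat.cast_sub hm]; norm_num
  have hk1 : ((k - 1 : ℕ):ℝ) = (k:ℝ) - 1 := by rw [Nat.cast_sub hk]; norm_num
  have hi0 : i0.1 < k := i0.2
  have hj0 : j0.1 < m - 1 := j0.2
  set g := gCol k m i0.1 j0.1 with hgdef
  have hcolEq : g i0.1 (j0.1 + 1) = g i0.1 j0.1 := by
    simp only [hgdef, gCol]
    rw [if_pos (by exact ⟨trivial, trivial⟩), if_neg (by omega)]
    push_cast
    ring
  have hcolLt : ∀ i j : ℕ, ¬(i = i0.1 ∧ j = j0.1) → g i j < g i (j + 1) := by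
    intro i j hne
    simp only [hgdef, gCol]
    apply div_lt_div_D hD
    have h2 : ¬(i = i0.1 ∧ j = j0.1 + 1) ∨ (i = i0.1 ∧ j = j0.1 + 1) := by tauto
    by_cases hc : i = i0.1 ∧ j = j0.1 + 1
    · rw [if_pos hc, if_neg (by omega)]
      push_cast
      linarith
    · rw [if_neg hc]
      by_cases hc' : i = i0.1 ∧ j + 1 = j0.1 + 1
      · exact absurd ⟨hc'.1, by omega⟩ hne
      · rw [if_neg hc']
        push_cast
        linarith
  have hcolLe : ∀ i j : ℕ, g i j ≤ g i (j + 1) := by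
    intro i j
    by_cases hc : i = i0.1 ∧ j = j0.1
    · obtain ⟨h1', h2'⟩ := hc
      subst h1'
      subst h2'
      exact le_of_eq hcolEq.symm
    · exact le_of_lt (hcolLt i j hc)
  have hrowLt : ∀ i j : ℕ, g (i + 1) j < g i j := by
    intro i j
    simp only [hgdef, gCol]
    apply div_lt_div_D hD
    by_cases hc : i + 1 = i0.1 ∧ j = j0.1 + 1
    · rw [if_pos hc, if_neg (by omega)]
      push_cast
      linarith
    · rw [if_neg hc]
      by_cases hc' : i = i0.1 ∧ j = j0.1 + 1
      · rw [if_pos hc']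
        push_cast
        linarith
      · rw [if_neg hc']
        push_cast
        linarith
  have htopLt : g 0 (m - 1) < 1 := by
    simp only [hgdef, gCol]
    rw [div_lt_one hD, hm1]
    by_cases hc : (0:ℕ) = i0.1 ∧ m - 1 = j0.1 + 1
    · rw [if_pos hc]
      linarith
    · rw [if_neg hc]
      linarith
  have hbotPos : 0 < g (k - 1) 0 := by
    simp only [hgdef, gCol]
    apply div_pos ?_ hD
    rw [if_neg (by omega), hk1]
    linarith
  refine ⟨gcPt a b g,
    memPt a b hab (fun i j _ _ => le_of_lt (hrowLt i j)) (fun i j _ _ => hcolLe i j)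
      (le_of_lt htopLt) (le_of_lt hbotPos), ?_, ?_⟩
  · rw [dot_col_pt, cst_col, hcolEq]
    ring
  · rintro (⟨i, j⟩ | ⟨i, j⟩ | u | u) hq
    · rw [dot_row_pt, cst_row]
      have := hrowLt i.1 j.1
      nlinarith
    · rw [dot_col_pt, cst_col]
      have hne : ¬(i.1 = i0.1 ∧ j.1 = j0.1) := by
        rintro ⟨h1', h2'⟩
        exact hq (by rw [Fin.ext h1', Fin.ext h2'])
      have := hcolLt i.1 j.1 hne
      nlinarith
    · rw [dot_top_pt, cst_top]
      nlinarith [htopLt]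
    · rw [dot_bot_pt, cst_bot]
      nlinarith [hbotPos]

/-- Grid function for a generic point on the top facet. -/
def gTop (k m : ℕ) : ℕ → ℕ → ℝ := fun i j => ((k:ℝ) - 1 - i + j + 1) / ((k:ℝ) + m - 1)

/-- Grid function for a generic point on the bottom facet. -/
def gBot (k m : ℕ) : ℕ → ℕ → ℝ := fun i j => ((k:ℝ) - 1 - i + j) / ((k:ℝ) + m - 1)

include hk hm in
lemma topFacetPoint (hab : b < a) (u0 : Unit) :
    ∃ x : GCSpace k m, x ∈ gcPolytope k m a b ∧
      gcDot (gcNormal k m hk hm a b (.inr (.inr (.inl u0)))).1 x =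
        (gcNormal k m hk hm a b (.inr (.inr (.inl u0)))).2 ∧
      ∀ q : GCIneq k m, q ≠ .inr (.inr (.inl u0)) →
        (gcNormal k m hk hm a b q).2 < gcDot (gcNormal k m hk hm a b q).1 x := by
  have hK : (1:ℝ) ≤ (k:ℝ) := by exact_mod_cast hk
  have hM : (1:ℝ) ≤ (m:ℝ) := by exact_mod_cast hm
  rcases eq_or_lt_of_le (by linarith : (2:ℝ) ≤ (k:ℝ) + m) with heq | hlt
  case inl =>
    -- k = m = 1 : the polytope is the segment [b,a] in ℝ^1
    have hk2 : k = 1 := by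
      have : ((k:ℝ)) ≤ 1 := by linarith
      have : k ≤ 1 := by exact_mod_cast this
      omega
    have hm2 : m = 1 := by
      have : ((m:ℝ)) ≤ 1 := by linarith
      have : m ≤ 1 := by exact_mod_cast this
      omega
    subst hk2
    subst hm2
    refine ⟨fun _ => a, ⟨?_, ?_, ?_, ?_⟩, ?_, ?_⟩
    · intro i j h1 h2
      omega
    · intro i j h1 h2
      omega
    · intro _ _
      exact le_refl a
    · intro _ _
      linarith
    · rw [dot_top, cst_top]
    · rintro (⟨i, j⟩ | ⟨i, j⟩ | u | u) hq
      · exact absurd i.2 (by omega)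
      · exact absurd j.2 (by omega)
      · exact absurd rfl hq
      · rw [dot_bot, cst_bot]
        exact hab
  case inr =>
  have hD : (0:ℝ) < (k:ℝ) + m - 1 := by linarith
  have hm1 : ((m - 1 : ℕ):ℝ) = (m:ℝ) - 1 := by rw [Nat.cast_sub hm]; norm_num
  have hk1 : ((k - 1 : ℕ):ℝ) = (k:ℝ) - 1 := by rw [Nat.cast_sub hk]; norm_num
  set g := gTop k m with hgdef
  have hrowLt : ∀ i j : ℕ, g (i + 1) j < g i j := by
    intro i j
    simp only [hgdef, gTop]
    apply div_lt_div_D hD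
    push_cast
    linarith
  have hcolLt : ∀ i j : ℕ, g i j < g i (j + 1) := by
    intro i j
    simp only [hgdef, gTop]
    apply div_lt_div_D hD
    push_cast
    linarith
  have htopEq : g 0 (m - 1) = 1 := by
    simp only [hgdef, gTop]
    rw [hm1]
    field_simp
    ring
  have hbotPos : 0 < g (k - 1) 0 := by
    simp only [hgdef, gTop]
    apply div_pos ?_ hD
    rw [hk1]
    linarith
  refine ⟨gcPt a b g,
    memPt a b hab (fun i j _ _ => le_of_lt (hrowLt i j)) (fun i j _ _ => le_of_lt (hcolLt i j))
      (le_of_eq htopEq) (le_of_lt hbotPos), ?_, ?_⟩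
  · rw [dot_top_pt, cst_top, htopEq]
    ring
  · rintro (⟨i, j⟩ | ⟨i, j⟩ | u | u) hq
    · rw [dot_row_pt, cst_row]
      have := hrowLt i.1 j.1
      nlinarith
    · rw [dot_col_pt, cst_col]
      have := hcolLt i.1 j.1
      nlinarith
    · exact absurd rfl hq
    · rw [dot_bot_pt, cst_bot]
      nlinarith [hbotPos]

include hk hm in
lemma botFacetPoint (hab : b < a) (u0 : Unit) :
    ∃ x : GCSpace k m, x ∈ gcPolytope k m a b ∧
      gcDot (gcNormal k m hk hm a b (.inr (.inr (.inr u0)))).1 x =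
        (gcNormal k m hk hm a b (.inr (.inr (.inr u0)))).2 ∧
      ∀ q : GCIneq k m, q ≠ .inr (.inr (.inr u0)) →
        (gcNormal k m hk hm a b q).2 < gcDot (gcNormal k m hk hm a b q).1 x := by
  have hK : (1:ℝ) ≤ (k:ℝ) := by exact_mod_cast hk
  have hM : (1:ℝ) ≤ (m:ℝ) := by exact_mod_cast hm
  rcases eq_or_lt_of_le (by linarith : (2:ℝ) ≤ (k:ℝ) + m) with heq | hlt
  case inl =>
    have hk2 : k = 1 := by
      have : ((k:ℝ)) ≤ 1 := by linarith
      have : k ≤ 1 := by exact_mod_cast this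
      omega
    have hm2 : m = 1 := by
      have : ((m:ℝ)) ≤ 1 := by linarith
      have : m ≤ 1 := by exact_mod_cast this
      omega
    subst hk2
    subst hm2
    refine ⟨fun _ => b, ⟨?_, ?_, ?_, ?_⟩, ?_, ?_⟩
    · intro i j h1 h2
      omega
    · intro i j h1 h2
      omega
    · intro _ _
      linarith
    · intro _ _
      exact le_refl b
    · rw [dot_bot, cst_bot]
    · rintro (⟨i, j⟩ | ⟨i, j⟩ | u | u) hq
      · exact absurd i.2 (by omega)
      · exact absurd j.2 (by omega)
      · rw [dot_top, cst_top]
        simpa using hab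
      · exact absurd rfl hq
  case inr =>
  have hD : (0:ℝ) < (k:ℝ) + m - 1 := by linarith
  have hm1 : ((m - 1 : ℕ):ℝ) = (m:ℝ) - 1 := by rw [Nat.cast_sub hm]; norm_num
  have hk1 : ((k - 1 : ℕ):ℝ) = (k:ℝ) - 1 := by rw [Nat.cast_sub hk]; norm_num
  set g := gBot k m with hgdef
  have hrowLt : ∀ i j : ℕ, g (i + 1) j < g i j := by
    intro i j
    simp only [hgdef, gBot]
    apply div_lt_div_D hD
    push_cast
    linarith
  have hcolLt : ∀ i j : ℕ, g i j < g i (j + 1) := by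
    intro i j
    simp only [hgdef, gBot]
    apply div_lt_div_D hD
    push_cast
    linarith
  have htopLt : g 0 (m - 1) < 1 := by
    simp only [hgdef, gBot]
    rw [div_lt_one hD, hm1]
    linarith
  have hbotEq : g (k - 1) 0 = 0 := by
    simp only [hgdef, gBot]
    rw [hk1]
    norm_num
  refine ⟨gcPt a b g,
    memPt a b hab (fun i j _ _ => le_of_lt (hrowLt i j)) (fun i j _ _ => le_of_lt (hcolLt i j))
      (le_of_lt htopLt) (le_of_eq hbotEq.symm), ?_, ?_⟩
  · rw [dot_bot_pt, cst_bot, hbotEq]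
    ring
  · rintro (⟨i, j⟩ | ⟨i, j⟩ | u | u) hq
    · rw [dot_row_pt, cst_row]
      have := hrowLt i.1 j.1
      nlinarith
    · rw [dot_col_pt, cst_col]
      have := hcolLt i.1 j.1
      nlinarith
    · rw [dot_top_pt, cst_top]
      nlinarith [htopLt]
    · exact absurd rfl hq

include hk hm in
/-- Existence of a point lying on exactly one given facet. -/
lemma facetPoint (hab : b < a) (q0 : GCIneq k m) :
    ∃ x : GCSpace k m, x ∈ gcPolytope k m a b ∧
      gcDot (gcNormal k m hk hm a b q0).1 x = (gcNormal k m hk hm a b q0).2 ∧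
      ∀ q : GCIneq k m, q ≠ q0 →
        (gcNormal k m hk hm a b q).2 < gcDot (gcNormal k m hk hm a b q).1 x := by
  obtain (⟨i, j⟩ | ⟨i, j⟩ | u | u) := q0
  · exact rowFacetPoint hk hm a b hab i j
  · exact colFacetPoint hk hm a b hab i j
  · exact topFacetPoint hk hm a b hab u
  · exact botFacetPoint hk hm a b hab u


lemma gcDot_sub_right (v x y : GCSpace k m) :
    gcDot v (x - y) = gcDot v x - gcDot v y := by
  simp [gcDot, mul_sub, Finset.sum_sub_distrib]

include hk hm in
lemma vectorSpan_gcPolytope (hab : b < a) :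
    vectorSpan ℝ (gcPolytope k m a b) = ⊤ := by
  obtain ⟨x0, hx0, hstrict⟩ := exists_interior_point hk hm a b hab
  rw [eq_top_iff]
  intro w _
  obtain ⟨t, ht, hmem⟩ := move hk hm a b w hx0 (fun q hq => absurd hq (hstrict q).ne')
  have hdiff : (x0 + t • w) -ᵥ x0 ∈ vectorSpan ℝ (gcPolytope k m a b) :=
    vsub_mem_vectorSpan ℝ hmem hx0
  have h2 : t • w ∈ vectorSpan ℝ (gcPolytope k m a b) := by
    simpa [vsub_eq_sub] using hdiff
  have h3 := Submodule.smul_mem _ t⁻¹ h2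
  rwa [smul_smul, inv_mul_cancel₀ (ne_of_gt ht), one_smul] at h3

lemma finrank_gcSpace : finrank ℝ (GCSpace k m) = k * m := by
  rw [Module.finrank_pi ℝ]
  simp [Fintype.card_prod]

include hk hm in
lemma faceDim_gcPolytope (hab : b < a) : faceDim (gcPolytope k m a b) = k * m := by
  unfold faceDim
  rw [vectorSpan_gcPolytope hk hm a b hab, finrank_top, finrank_gcSpace]

lemma exists_dot_ne_zero (q : GCIneq k m) :
    ∃ x : GCSpace k m, gcDot (gcNormal k m hk hm a b q).1 x ≠ 0 := by
  obtain (⟨i, j⟩ | ⟨i, j⟩ | u | u) := q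
  · refine ⟨gcBasis k m ⟨i.1, by have := i.2; omega⟩ j, ?_⟩
    rw [dot_row]
    simp [gcBasis, Pi.single_apply, Prod.ext_iff, Fin.ext_iff]
  · refine ⟨gcBasis k m i ⟨j.1 + 1, by have := j.2; omega⟩, ?_⟩
    rw [dot_col]
    simp [gcBasis, Pi.single_apply, Prod.ext_iff, Fin.ext_iff]
  · refine ⟨gcBasis k m ⟨0, hk⟩ ⟨m - 1, Nat.sub_one_lt hm.ne'⟩, ?_⟩
    rw [dot_top]
    simp [gcBasis, Pi.single_apply]
  · refine ⟨gcBasis k m ⟨k - 1, Nat.sub_one_lt hk.ne'⟩ ⟨0, hm⟩, ?_⟩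
    rw [dot_bot]
    simp [gcBasis, Pi.single_apply]

include hk hm in
lemma finrank_ker_add_one (q : GCIneq k m) :
    finrank ℝ (LinearMap.ker (gcDotL (gcNormal k m hk hm a b q).1)) + 1 = k * m := by
  obtain ⟨x, hx⟩ := exists_dot_ne_zero hk hm a b q
  have hsurj : Function.Surjective (gcDotL (gcNormal k m hk hm a b q).1) := by
    intro r
    refine ⟨(r / gcDot (gcNormal k m hk hm a b q).1 x) • x, ?_⟩
    rw [gcDotL_apply, gcDot_smul_right]
    field_simp
  have hrange : LinearMap.range (gcDotL (gcNormal k m hk hm a b q).1) = ⊤ :=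
    LinearMap.range_eq_top.mpr hsurj
  have h := LinearMap.finrank_range_add_finrank_ker (gcDotL (gcNormal k m hk hm a b q).1)
  rw [hrange, finrank_top, Module.finrank_self, finrank_gcSpace] at h
  omega

include hk hm in
lemma facet_spec (hab : b < a) (q : GCIneq k m) :
    IsFaceOf (gcPolytope k m a b)
      {x ∈ gcPolytope k m a b |
        gcDot (gcNormal k m hk hm a b q).1 x = (gcNormal k m hk hm a b q).2} ∧
    vectorSpan ℝ
      {x ∈ gcPolytope k m a b |
        gcDot (gcNormal k m hk hm a b q).1 x = (gcNormal k m hk hm a b q).2} =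
      LinearMap.ker (gcDotL (gcNormal k m hk hm a b q).1) := by
  obtain ⟨x0, hx0, heq0, hstrict⟩ := facetPoint hk hm a b hab q
  constructor
  · refine ⟨⟨x0, hx0, heq0⟩, gcDotL (gcNormal k m hk hm a b q).1, ?_⟩
    ext x
    simp only [Set.mem_setOf_eq, gcDotL_apply]
    constructor
    · rintro ⟨hx, hxe⟩
      exact ⟨hx, fun y hy => by
        rw [hxe]; exact (mem_gcPolytope_iff hk hm a b y).mp hy q⟩
    · rintro ⟨hx, hmin⟩
      refine ⟨hx, le_antisymm ?_ ((mem_gcPolytope_iff hk hm a b x).mp hx q)⟩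
      have := hmin x0 hx0
      rwa [heq0] at this
  · apply le_antisymm
    · rw [vectorSpan_def]
      apply Submodule.span_le.mpr
      rintro v ⟨x, hx, y, hy, rfl⟩
      simp only [SetLike.mem_coe, LinearMap.mem_ker, gcDotL_apply, vsub_eq_sub]
      rw [gcDot_sub_right, hx.2, hy.2, sub_self]
    · intro w hw
      have hwdot : gcDot (gcNormal k m hk hm a b q).1 w = 0 := hw
      obtain ⟨t, ht, hmem⟩ := move hk hm a b w hx0 (fun q' hq' => by
        by_cases hqq : q' = q
        · subst hqq; exact hwdot
        · exact absurd hq' (hstrict q' hqq).ne')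
      have hmem2 : x0 + t • w ∈
          {x ∈ gcPolytope k m a b |
            gcDot (gcNormal k m hk hm a b q).1 x = (gcNormal k m hk hm a b q).2} := by
        refine ⟨hmem, ?_⟩
        rw [gcDot_add_right, gcDot_smul_right, hwdot, heq0]
        ring
      have hdiff := vsub_mem_vectorSpan ℝ hmem2 (Set.mem_sep hx0 heq0)
      have h2 : t • w ∈ vectorSpan ℝ
          {x ∈ gcPolytope k m a b |
            gcDot (gcNormal k m hk hm a b q).1 x = (gcNormal k m hk hm a b q).2} := by
        simpa [vsub_eq_sub] using hdiff
      have h3 := Submodule.smul_mem _ t⁻¹ h2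
      rwa [smul_smul, inv_mul_cancel₀ (ne_of_gt ht), one_smul] at h3

include hk hm in
lemma faceDim_facet (hab : b < a) (q : GCIneq k m) :
    faceDim {x ∈ gcPolytope k m a b |
      gcDot (gcNormal k m hk hm a b q).1 x = (gcNormal k m hk hm a b q).2} = k * m - 1 := by
  unfold faceDim
  rw [(facet_spec hk hm a b hab q).2]
  exact Nat.eq_sub_of_add_eq (finrank_ker_add_one hk hm a b q)

include hk hm in
lemma facet_inj (hab : b < a) :
    Function.Injective (fun q : GCIneq k m =>
      {x ∈ gcPolytope k m a b |
        gcDot (gcNormal k m hk hm a b q).1 x = (gcNormal k m hk hm a b q).2}) := by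
  intro q q' h
  by_contra hne
  obtain ⟨x0, hx0, heq0, hstrict⟩ := facetPoint hk hm a b hab q
  have hx0q : x0 ∈ {x ∈ gcPolytope k m a b |
      gcDot (gcNormal k m hk hm a b q).1 x = (gcNormal k m hk hm a b q).2} :=
    Set.mem_sep hx0 heq0
  have h2 : {x ∈ gcPolytope k m a b |
      gcDot (gcNormal k m hk hm a b q).1 x = (gcNormal k m hk hm a b q).2} =
      {x ∈ gcPolytope k m a b |
      gcDot (gcNormal k m hk hm a b q').1 x = (gcNormal k m hk hm a b q').2} := h
  rw [h2] at hx0q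
  exact (hstrict q' (fun hc => hne hc.symm)).ne' hx0q.2

include hk hm in
lemma facet_complete (hab : b < a) (F : Set (GCSpace k m))
    (hF : IsFaceOf (gcPolytope k m a b) F) (hdim : faceDim F = k * m - 1) :
    ∃ q : GCIneq k m,
      F = {x ∈ gcPolytope k m a b |
        gcDot (gcNormal k m hk hm a b q).1 x = (gcNormal k m hk hm a b q).2} := by
  classical
  obtain ⟨hFne, ℓ, hFeq⟩ := hF
  have hFsubΔ : F ⊆ gcPolytope k m a b := by
    rw [hFeq]; exact fun x hx => hx.1
  have hconst : ∀ x ∈ F, ∀ y ∈ F, ℓ x = ℓ y := by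
    intro x hx y hy
    have hx' : x ∈ {x ∈ gcPolytope k m a b | ∀ y ∈ gcPolytope k m a b, ℓ x ≤ ℓ y} :=
      hFeq ▸ hx
    have hy' : y ∈ {x ∈ gcPolytope k m a b | ∀ y ∈ gcPolytope k m a b, ℓ x ≤ ℓ y} :=
      hFeq ▸ hy
    exact le_antisymm (hx'.2 y hy'.1) (hy'.2 x hx'.1)
  have hFconv : Convex ℝ F := by
    rw [hFeq]
    intro x hx y hy s t hs ht hst
    refine ⟨convex_gcPolytope hk hm a b hx.1 hy.1 hs ht hst, fun z hz => ?_⟩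
    have h1 := hx.2 z hz
    have h2 := hy.2 z hz
    have : ℓ (s • x + t • y) = s * ℓ x + t * ℓ y := by
      simp [map_add, map_smul]
    rw [this]
    calc s * ℓ x + t * ℓ y ≤ s * ℓ z + t * ℓ z :=
          add_le_add (mul_le_mul_of_nonneg_left h1 hs) (mul_le_mul_of_nonneg_left h2 ht)
      _ = ℓ z := by rw [← add_mul, hst, one_mul]
  have hA : ∀ x ∈ F, ∃ q : GCIneq k m,
      gcDot (gcNormal k m hk hm a b q).1 x = (gcNormal k m hk hm a b q).2 := by
    intro x hxF
    by_contra hno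
    push_neg at hno
    by_cases hl : ℓ = 0
    · have hFΔ : F = gcPolytope k m a b := by
        rw [hFeq]
        ext z
        simp [hl]
      rw [hFΔ, faceDim_gcPolytope hk hm a b hab] at hdim
      have hlt : k * m - 1 < k * m := Nat.sub_lt (Nat.mul_pos hk hm) one_pos
      exact absurd hdim hlt.ne'
    · obtain ⟨u, hu⟩ : ∃ u, ℓ u ≠ 0 := by
        by_contra h'
        push_neg at h'
        exact hl (LinearMap.ext fun v => by simp [h' v])
      set w : GCSpace k m := -(ℓ u)⁻¹ • u with hw
      have hℓw : ℓ w = -1 := by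
        rw [hw, map_smul, smul_eq_mul]
        field_simp
      obtain ⟨t, ht, hmem⟩ :=
        move hk hm a b w (hFsubΔ hxF) (fun q hq => absurd hq (hno q))
      have hx' : x ∈ {x ∈ gcPolytope k m a b | ∀ y ∈ gcPolytope k m a b, ℓ x ≤ ℓ y} :=
        hFeq ▸ hxF
      have hle := hx'.2 (x + t • w) hmem
      have : ℓ (x + t • w) = ℓ x - t := by
        rw [map_add, map_smul, hℓw, smul_eq_mul]
        ring
      linarith [this ▸ hle]
  have hB : ∃ q : GCIneq k m, ∀ x ∈ F,
      gcDot (gcNormal k m hk hm a b q).1 x = (gcNormal k m hk hm a b q).2 := by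
    by_contra hno
    push_neg at hno
    choose y hyF hy using hno
    set N : ℕ := Fintype.card (GCIneq k m) with hN
    have hNpos : 0 < N := Fintype.card_pos
    have hNR : (0:ℝ) < (N:ℝ) := by exact_mod_cast hNpos
    set z : GCSpace k m := ∑ q : GCIneq k m, ((N:ℝ)⁻¹) • y q with hz
    have hzF : z ∈ F := by
      refine hFconv.sum_mem (fun _ _ => by positivity) ?_ (fun q _ => hyF q)
      rw [Finset.sum_const, Finset.card_univ, ← hN, nsmul_eq_mul]
      field_simp
    obtain ⟨q0, hq0⟩ := hA z hzF
    have hzdot : gcDot (gcNormal k m hk hm a b q0).1 z =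
        ∑ q : GCIneq k m, (N:ℝ)⁻¹ * gcDot (gcNormal k m hk hm a b q0).1 (y q) := by
      rw [hz]
      rw [show gcDot (gcNormal k m hk hm a b q0).1 (∑ q : GCIneq k m, ((N:ℝ)⁻¹) • y q) =
          gcDotL (gcNormal k m hk hm a b q0).1 (∑ q : GCIneq k m, ((N:ℝ)⁻¹) • y q) from rfl]
      rw [map_sum]
      refine Finset.sum_congr rfl fun q _ => ?_
      rw [map_smul]
      simp
    have hgt : (gcNormal k m hk hm a b q0).2 < gcDot (gcNormal k m hk hm a b q0).1 z := by
      have hcst : (gcNormal k m hk hm a b q0).2 =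
          ∑ _q : GCIneq k m, (N:ℝ)⁻¹ * (gcNormal k m hk hm a b q0).2 := by
        rw [Finset.sum_const, Finset.card_univ, ← hN, nsmul_eq_mul]
        field_simp
      rw [hzdot, hcst]
      apply Finset.sum_lt_sum
      · intro i _
        have := (mem_gcPolytope_iff hk hm a b (y i)).mp (hFsubΔ (hyF i)) q0
        have hNinv : (0:ℝ) ≤ (N:ℝ)⁻¹ := by positivity
        nlinarith
      · refine ⟨q0, Finset.mem_univ _, ?_⟩
        have h1 := (mem_gcPolytope_iff hk hm a b (y q0)).mp (hFsubΔ (hyF q0)) q0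
        have h2 : (gcNormal k m hk hm a b q0).2 <
            gcDot (gcNormal k m hk hm a b q0).1 (y q0) :=
          lt_of_le_of_ne h1 (Ne.symm (hy q0))
        have hNinv : (0:ℝ) < (N:ℝ)⁻¹ := by positivity
        nlinarith
    exact hgt.ne' hq0
  obtain ⟨q, hq⟩ := hB
  refine ⟨q, ?_⟩
  have hFsub : F ⊆ {x ∈ gcPolytope k m a b |
      gcDot (gcNormal k m hk hm a b q).1 x = (gcNormal k m hk hm a b q).2} :=
    fun x hx => Set.mem_sep (hFsubΔ hx) (hq x hx)
  have hker := (facet_spec hk hm a b hab q).2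
  have hle : vectorSpan ℝ F ≤ LinearMap.ker (gcDotL (gcNormal k m hk hm a b q).1) := by
    rw [← hker]
    exact vectorSpan_mono ℝ hFsub
  have hrk := finrank_ker_add_one hk hm a b q
  have heqspan : vectorSpan ℝ F = LinearMap.ker (gcDotL (gcNormal k m hk hm a b q).1) := by
    apply Submodule.eq_of_le_of_finrank_le hle
    unfold faceDim at hdim
    rw [hdim]
    exact le_of_eq (Nat.eq_sub_of_add_eq hrk)
  apply Set.Subset.antisymm hFsub
  intro y hy
  obtain ⟨x0, hx0F⟩ := hFne
  have hy0 : y -ᵥ x0 ∈ vectorSpan ℝ {x ∈ gcPolytope k m a b |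
      gcDot (gcNormal k m hk hm a b q).1 x = (gcNormal k m hk hm a b q).2} :=
    vsub_mem_vectorSpan ℝ hy (hFsub hx0F)
  rw [hker, ← heqspan] at hy0
  have hv : vectorSpan ℝ F ≤ LinearMap.ker ℓ := by
    rw [vectorSpan_def]
    apply Submodule.span_le.mpr
    rintro v ⟨p, hp, p', hp', rfl⟩
    simp only [SetLike.mem_coe, LinearMap.mem_ker, vsub_eq_sub, map_sub]
    exact sub_eq_zero.mpr (hconst p hp p' hp')
  have hyx0 : ℓ y = ℓ x0 := by
    have := hv hy0
    simp only [LinearMap.mem_ker, vsub_eq_sub, map_sub] at this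
    linarith
  have hx0' : x0 ∈ {x ∈ gcPolytope k m a b | ∀ y ∈ gcPolytope k m a b, ℓ x ≤ ℓ y} :=
    hFeq ▸ hx0F
  rw [hFeq]
  exact ⟨hy.1, fun z hz => by rw [hyx0]; exact hx0'.2 z hz⟩


include hk hm in
lemma interior_nonempty (hab : b < a) : (interior (gcPolytope k m a b)).Nonempty := by
  obtain ⟨x0, hx0, hstrict⟩ := exists_interior_point hk hm a b hab
  obtain ⟨δ, hδ, hslack⟩ := exists_uniform_slack hk hm a b hstrict
  exact ⟨x0, mem_interior.mpr ⟨Metric.ball x0 (δ/2), ball_subset hk hm a b hδ hslack,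
    Metric.isOpen_ball, Metric.mem_ball_self (by linarith)⟩⟩

end GCAux




open GCAux in
/-- The Gelfand–Cetlin polytope `Δ` of `Gr(k,n)` is a compact convex polytope of full
dimension `k(n−k)`; it has exactly `(k−1)(n−k) + k(n−k−1) + 2` facets, and each of the
listed defining inequalities defines exactly one facet, with inward primitive integral
normal vectors `e_{i,j} − e_{i+1,j}`, `e_{i,j+1} − e_{i,j}`, `−e_{1,n−k}` and `e_{k,1}`
respectively. -/
theorem gelfandCetlin_polytope_facets (n k : ℕ) (hn : 2 ≤ n) (hk1 : 1 ≤ k)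
    (hk2 : k ≤ n - 1) (a b : ℝ) (hab : b < a) :
    IsCompact (gcPolytope k (n - k) a b) ∧
    Convex ℝ (gcPolytope k (n - k) a b) ∧
    (interior (gcPolytope k (n - k) a b)).Nonempty ∧
    faceDim (gcPolytope k (n - k) a b) = k * (n - k) ∧
    -- the polytope is cut out by the listed inequalities, with inward normals:
    gcPolytope k (n - k) a b =
      {x | ∀ q : GCIneq k (n - k),
        (gcNormal k (n - k) (by omega) (by omega) a b q).2 ≤
          gcDot (gcNormal k (n - k) (by omega) (by omega) a b q).1 x} ∧
    -- each of the listed inequalities defines a facet: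
    (∀ q : GCIneq k (n - k),
      IsFaceOf (gcPolytope k (n - k) a b)
        {x ∈ gcPolytope k (n - k) a b |
          gcDot (gcNormal k (n - k) (by omega) (by omega) a b q).1 x =
            (gcNormal k (n - k) (by omega) (by omega) a b q).2} ∧
      faceDim {x ∈ gcPolytope k (n - k) a b |
          gcDot (gcNormal k (n - k) (by omega) (by omega) a b q).1 x =
            (gcNormal k (n - k) (by omega) (by omega) a b q).2} = k * (n - k) - 1) ∧
    -- distinct listed inequalities define distinct facets ("exactly one" each):
    Function.Injective (fun q : GCIneq k (n - k) =>
      {x ∈ gcPolytope k (n - k) a b |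
        gcDot (gcNormal k (n - k) (by omega) (by omega) a b q).1 x =
          (gcNormal k (n - k) (by omega) (by omega) a b q).2}) ∧
    -- every facet arises from one of the listed inequalities:
    (∀ F : Set (GCSpace k (n - k)),
      IsFaceOf (gcPolytope k (n - k) a b) F → faceDim F = k * (n - k) - 1 →
      ∃ q : GCIneq k (n - k),
        F = {x ∈ gcPolytope k (n - k) a b |
          gcDot (gcNormal k (n - k) (by omega) (by omega) a b q).1 x =
            (gcNormal k (n - k) (by omega) (by omega) a b q).2}) ∧
    -- hence the number of facets:
    {F : Set (GCSpace k (n - k)) |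
        IsFaceOf (gcPolytope k (n - k) a b) F ∧ faceDim F = k * (n - k) - 1}.ncard =
      (k - 1) * (n - k) + k * (n - k - 1) + 2 := by
  have hk : 0 < k := hk1
  have hm : 0 < n - k := by omega
  refine ⟨isCompact_gcPolytope hk hm a b, convex_gcPolytope hk hm a b,
    interior_nonempty hk hm a b hab, faceDim_gcPolytope hk hm a b hab, ?_, ?_, ?_, ?_, ?_⟩
  · ext x
    exact mem_gcPolytope_iff hk hm a b x
  · exact fun q => ⟨(facet_spec hk hm a b hab q).1, faceDim_facet hk hm a b hab q⟩
  · exact facet_inj hk hm a b hab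
  · exact fun F hF hdim => facet_complete hk hm a b hab F hF hdim
  · have hSeq : {F : Set (GCSpace k (n - k)) |
        IsFaceOf (gcPolytope k (n - k) a b) F ∧ faceDim F = k * (n - k) - 1} =
        Set.range (fun q : GCIneq k (n - k) =>
          {x ∈ gcPolytope k (n - k) a b |
            gcDot (gcNormal k (n - k) hk hm a b q).1 x =
              (gcNormal k (n - k) hk hm a b q).2}) := by
      ext F
      constructor
      · rintro ⟨hface, hdim⟩
        obtain ⟨q, hq⟩ := facet_complete hk hm a b hab F hface hdim
        exact ⟨q, hq.symm⟩
      · rintro ⟨q, rfl⟩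
        exact ⟨(facet_spec hk hm a b hab q).1, faceDim_facet hk hm a b hab q⟩
    rw [hSeq, ← Set.image_univ, Set.ncard_image_of_injective _ (facet_inj hk hm a b hab),
      Set.ncard_univ, Nat.card_eq_fintype_card]
    simp only [Fintype.card_sum, Fintype.card_prod, Fintype.card_fin, Fintype.card_unit]
    ring

end
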